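/- arXiv:2006.02124 — 2 statements merged into one kernel-verified Lean document; each statement's English description precedes it below -/
import Mathlib

section
/- Let G be a graph, H a graph with root vertex v ∈ V(H). If there exists a γ_I(G∘_v H)-function f such that B_f = {x ∈ V(G) : ω(f_x) = γ_I(H) − 1} is nonempty, then γ_I(G∘_v H) ≤ n(G)·(γ_I(H) − 1) + γ_I(G). -/
open Finset

open scoped Classical

/-- An Italian dominating function on a finite simple graph: values in {0,1,2} and
every vertex with value 0 has neighbour values summing to at least 2. -/
noncomputable def IsIDF {α : Type*} [Fintype α] (G : SimpleGraph α) (f : α → ℕ) : Prop :=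
  (∀ u, f u ≤ 2) ∧
    ∀ u, f u = 0 → 2 ≤ ∑ w ∈ Finset.univ.filter (fun w => G.Adj u w), f w

/-- The Italian domination number γ_I(G). -/
noncomputable def italianNumber {α : Type*} [Fintype α] (G : SimpleGraph α) : ℕ :=
  sInf {n | ∃ f : α → ℕ, IsIDF G f ∧ ∑ u, f u = n}

/-- A γ_I(G)-function: an IDF on G of minimum weight. -/
noncomputable def IsMinIDF {α : Type*} [Fintype α] (G : SimpleGraph α) (f : α → ℕ) : Prop :=
  IsIDF G f ∧ ∑ u, f u = italianNumber G

/-- D is a dominating set of G. -/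
def IsDomSet {α : Type*} (G : SimpleGraph α) (D : Set α) : Prop :=
  ∀ u ∉ D, ∃ w ∈ D, G.Adj u w

/-- The domination number γ(G). -/
noncomputable def dominationNumber {α : Type*} [Fintype α] (G : SimpleGraph α) : ℕ :=
  sInf {n | ∃ D : Finset α, IsDomSet G ↑D ∧ D.card = n}

/-- The degree of a vertex. -/
noncomputable def deg {α : Type*} [Fintype α] (G : SimpleGraph α) (u : α) : ℕ :=
  (Finset.univ.filter (fun w => G.Adj u w)).card

/-- The rooted product G∘_v H: one copy of H for each vertex of G, the root v of the
x-th copy being identified with the vertex x of G. The pair (x, y) is the vertex y of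
the x-th copy of H; in particular (x, v) is the vertex x of G. -/
def rootedProd {α β : Type*} (G : SimpleGraph α) (H : SimpleGraph β) (v : β) :
    SimpleGraph (α × β) where
  Adj p q := (p.1 = q.1 ∧ H.Adj p.2 q.2) ∨ (p.2 = v ∧ q.2 = v ∧ G.Adj p.1 q.1)
  symm := by
    constructor
    rintro ⟨x, y⟩ ⟨x', y'⟩ (⟨h1, h2⟩ | ⟨h1, h2, h3⟩)
    · exact Or.inl ⟨h1.symm, h2.symm⟩
    · exact Or.inr ⟨h2, h1, h3.symm⟩
  loopless := by
    constructor
    rintro ⟨x, y⟩ (⟨_, h⟩ | ⟨_, _, h⟩)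
    · exact H.loopless.irrefl _ h
    · exact G.loopless.irrefl _ h

/-- The weight ω(f_x) of the restriction of f to the copy H_x. -/
def copyWeight {α β : Type*} [Fintype β] (f : α × β → ℕ) (x : α) : ℕ :=
  ∑ y, f (x, y)

/-- The graph H − {v} obtained from H by deleting the vertex v. -/
def deleteVertex {β : Type*} (H : SimpleGraph β) (v : β) : SimpleGraph {w : β // w ≠ v} :=
  SimpleGraph.induce {w : β | w ≠ v} H


lemma idf_two' {α : Type*} [Fintype α] (G : SimpleGraph α) : IsIDF G (fun _ => 2) :=
  ⟨fun _ => le_refl 2, fun _ h => by simp at h⟩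

lemma italian_set_nonempty' {α : Type*} [Fintype α] (G : SimpleGraph α) :
    {n | ∃ f : α → ℕ, IsIDF G f ∧ ∑ u, f u = n}.Nonempty :=
  ⟨_, fun _ => 2, idf_two' G, rfl⟩

lemma exists_minIDF' {α : Type*} [Fintype α] (G : SimpleGraph α) :
    ∃ f : α → ℕ, IsIDF G f ∧ ∑ u, f u = italianNumber G :=
  Nat.sInf_mem (italian_set_nonempty' G)

lemma italian_le' {α : Type*} [Fintype α] (G : SimpleGraph α) {f : α → ℕ} (hf : IsIDF G f) :
    italianNumber G ≤ ∑ u, f u :=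
  Nat.sInf_le ⟨f, hf, rfl⟩

lemma italian_pos' {α : Type*} [Fintype α] [Nonempty α] (G : SimpleGraph α) :
    1 ≤ italianNumber G := by
  by_contra h
  push_neg at h
  interval_cases h' : italianNumber G
  · obtain ⟨f, hf, hw⟩ := exists_minIDF' G
    rw [h'] at hw
    have hz : ∀ u, f u = 0 := fun u => Finset.sum_eq_zero_iff.mp hw u (mem_univ u)
    obtain ⟨u⟩ := ‹Nonempty α›
    have := hf.2 u (hz u)
    simp [hz] at this

lemma sum_filter_fst' {α β : Type*} [Fintype α] [Fintype β]
    (f : α × β → ℕ) (a : α) (P : β → Prop) :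
    ∑ w ∈ univ.filter (fun w : α × β => w.1 = a ∧ P w.2), f w
      = ∑ b ∈ univ.filter (fun b => P b), f (a, b) := by
  rw [Finset.sum_filter, Finset.sum_filter, Fintype.sum_prod_type]
  rw [Finset.sum_eq_single a]
  · exact Finset.sum_congr rfl (fun b _ => by simp)
  · intro a' _ ha'
    exact Finset.sum_eq_zero (fun b _ => by simp [ha'])
  · simp

lemma sum_filter_snd' {α β : Type*} [Fintype α] [Fintype β]
    (f : α × β → ℕ) (v : β) (Q : α → Prop) :
    ∑ w ∈ univ.filter (fun w : α × β => w.2 = v ∧ Q w.1), f w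
      = ∑ a ∈ univ.filter (fun a => Q a), f (a, v) := by
  rw [Finset.sum_filter, Finset.sum_filter, Fintype.sum_prod_type]
  apply Finset.sum_congr rfl
  intro a _
  rw [Finset.sum_eq_single v] <;> simp +contextual [eq_comm]

/-- Proposition 1: if some γ_I(G∘_v H)-function f has B_f ≠ ∅, then
γ_I(G∘_v H) ≤ n(G)(γ_I(H) − 1) + γ_I(G). -/
theorem stmt4 {α β : Type*} [Fintype α] [Nonempty α] [Fintype β]
    (G : SimpleGraph α) (H : SimpleGraph β) (v : β)
    (hex : ∃ f : α × β → ℕ, IsMinIDF (rootedProd G H v) f ∧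
      ∃ x : α, copyWeight f x = italianNumber H - 1) :
    italianNumber (rootedProd G H v) ≤
      Fintype.card α * (italianNumber H - 1) + italianNumber G := by
  haveI : Nonempty β := ⟨v⟩
  obtain ⟨f, ⟨⟨hf2, hf0⟩, -⟩, x, hx⟩ := hex
  have hhw : ∑ y, f (x, y) = italianNumber H - 1 := hx
  have hHpos : 1 ≤ italianNumber H := italian_pos' H
  set h : β → ℕ := fun y => f (x, y) with hh
  -- failing vertices of h must satisfy the IDF sum condition unless they are v
  have key : ∀ y : β, y ≠ v → h y = 0 →
      2 ≤ ∑ b ∈ univ.filter (fun b => H.Adj y b), h b := by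
    intro y hy h0
    have h2 := hf0 (x, y) h0
    have heq : univ.filter (fun w : α × β => (rootedProd G H v).Adj (x, y) w)
        = univ.filter (fun w : α × β => w.1 = x ∧ H.Adj y w.2) := by
      apply Finset.filter_congr
      intro w _
      simp only [rootedProd]
      constructor
      · rintro (⟨h1, h2⟩ | ⟨h1, -, -⟩)
        · exact ⟨h1.symm, h2⟩
        · exact absurd h1 hy
      · rintro ⟨h1, h2⟩
        exact Or.inl ⟨h1.symm, h2⟩
    rw [heq, sum_filter_fst'] at h2
    exact h2
  -- h is not an IDF on H, and its failing vertex must be v; hence h v = 0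
  have hnot : ¬ IsIDF H h := by
    intro hidf
    have := italian_le' H hidf
    rw [hhw] at this
    omega
  have hfail : ∃ y, h y = 0 ∧ ∑ b ∈ univ.filter (fun b => H.Adj y b), h b < 2 := by
    by_contra hc
    push_neg at hc
    exact hnot ⟨fun u => hf2 (x, u), fun u hu => hc u hu⟩
  obtain ⟨y0, hy0, hy0s⟩ := hfail
  have hv0 : h v = 0 := by
    by_cases hne : y0 = v
    · rwa [hne] at hy0
    · exact absurd (key y0 hne hy0) (not_le.mpr hy0s)
  -- take a minimum IDF g on G and build the combined function F
  obtain ⟨g, hg, hgw⟩ := exists_minIDF' G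
  set F : α × β → ℕ := fun p => h p.2 + (if p.2 = v then g p.1 else 0) with hF
  have hFv : ∀ a : α, F (a, v) = g a := by
    intro a
    simp [hF, hv0]
  have hFIDF : IsIDF (rootedProd G H v) F := by
    constructor
    · intro p
      by_cases hp : p.2 = v
      · simp only [hF, hp, if_pos]
        rw [hv0]
        simpa using hg.1 p.1
      · simp only [hF, hp, if_neg, not_false_iff]
        simpa using hf2 (x, p.2)
    · rintro ⟨a, b⟩ hp
      by_cases hb : b = v
      · subst hb
        have hga : g a = 0 := by
          have := hFv a
          omega
        have hsub : univ.filter (fun w : α × β => w.2 = b ∧ G.Adj a w.1)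
            ⊆ univ.filter (fun w : α × β => (rootedProd G H b).Adj (a, b) w) := by
          intro w hw
          simp only [Finset.mem_filter, Finset.mem_univ, true_and] at hw ⊢
          exact Or.inr ⟨rfl, hw.1, hw.2⟩
        calc 2 ≤ ∑ a' ∈ univ.filter (fun a' => G.Adj a a'), g a' := hg.2 a hga
          _ = ∑ a' ∈ univ.filter (fun a' => G.Adj a a'), F (a', b) := by
                exact Finset.sum_congr rfl (fun a' _ => (hFv a').symm)
          _ = ∑ w ∈ univ.filter (fun w : α × β => w.2 = b ∧ G.Adj a w.1), F w := by
                rw [sum_filter_snd']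
          _ ≤ _ := Finset.sum_le_sum_of_subset hsub
      · have hb0 : h b = 0 := by
          simp only [hF, hb, if_neg, not_false_iff, add_zero] at hp
          exact hp
        have heq : univ.filter (fun w : α × β => (rootedProd G H v).Adj (a, b) w)
            = univ.filter (fun w : α × β => w.1 = a ∧ H.Adj b w.2) := by
          apply Finset.filter_congr
          intro w _
          simp only [rootedProd]
          constructor
          · rintro (⟨h1, h2⟩ | ⟨h1, -, -⟩)
            · exact ⟨h1.symm, h2⟩
            · exact absurd h1 hb
          · rintro ⟨h1, h2⟩
            exact Or.inl ⟨h1.symm, h2⟩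
        rw [heq, sum_filter_fst']
        calc 2 ≤ ∑ b' ∈ univ.filter (fun b' => H.Adj b b'), h b' := key b hb hb0
          _ ≤ ∑ b' ∈ univ.filter (fun b' => H.Adj b b'), F (a, b') := by
                apply Finset.sum_le_sum
                intro b' _
                simp only [hF]
                omega
  have hwF : ∑ p, F p = Fintype.card α * (italianNumber H - 1) + italianNumber G := by
    rw [Fintype.sum_prod_type]
    have : ∀ a : α, ∑ b, F (a, b) = (italianNumber H - 1) + g a := by
      intro a
      simp only [hF]
      rw [Finset.sum_add_distrib, hhw]
      congr 1
      simp
    rw [Finset.sum_congr rfl (fun a _ => this a), Finset.sum_add_distrib, hgw]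
    simp [Finset.sum_const, Finset.card_univ, mul_comm]
  calc italianNumber (rootedProd G H v) ≤ ∑ p, F p := italian_le' (rootedProd G H v) hFIDF
    _ = _ := hwF
end

section
/- Let G be a graph of maximum degree at least 2, H a graph and v ∈ V(H). Then the following are equivalent: (1) γ_I(G∘_v H) = n(G)·(γ_I(H) − 1) + γ_I(G) or γ_I(G∘_v H) = n(G)·(γ_I(H) − 1) + γ(G); (2) γ_I(H − {v}) = γ_I(H) − 1. -/
open Finset

open scoped Classical

section Aux1

variable {γ : Type*} [Fintype γ]

lemma aux_isIDF_two (G : SimpleGraph γ) : IsIDF G (fun _ => 2) :=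
  ⟨fun _ => le_refl 2, fun u h => by simp at h⟩

lemma aux_exists_min (G : SimpleGraph γ) :
    ∃ f : γ → ℕ, IsIDF G f ∧ ∑ u, f u = italianNumber G :=
  Nat.sInf_mem (⟨_, _, aux_isIDF_two G, rfl⟩ :
    Set.Nonempty {n | ∃ f : γ → ℕ, IsIDF G f ∧ ∑ u, f u = n})

lemma aux_italian_le (G : SimpleGraph γ) {f : γ → ℕ} (hf : IsIDF G f) :
    italianNumber G ≤ ∑ u, f u := Nat.sInf_le ⟨f, hf, rfl⟩

lemma aux_dom_le (G : SimpleGraph γ) {D : Finset γ} (h : IsDomSet G ↑D) :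
    dominationNumber G ≤ D.card := Nat.sInf_le ⟨D, h, rfl⟩

lemma aux_exists_min_dom (G : SimpleGraph γ) :
    ∃ D : Finset γ, IsDomSet G ↑D ∧ D.card = dominationNumber G :=
  Nat.sInf_mem (⟨(univ : Finset γ).card, univ, fun u hu => absurd (Finset.mem_coe.mpr (mem_univ u)) hu, rfl⟩ :
    Set.Nonempty {n | ∃ D : Finset γ, IsDomSet G ↑D ∧ D.card = n})

lemma aux_one_le_italian [Nonempty γ] (G : SimpleGraph γ) : 1 ≤ italianNumber G := by
  obtain ⟨f, hf, hw⟩ := aux_exists_min G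
  by_contra h
  have hw0 : ∑ u, f u = 0 := by omega
  obtain ⟨u⟩ := ‹Nonempty γ›
  have hfu : ∀ w, f w = 0 := fun w =>
    (Finset.sum_eq_zero_iff.mp hw0) w (mem_univ w)
  have h2 := hf.2 u (hfu u)
  rw [Finset.sum_eq_zero (fun w _ => hfu w)] at h2
  omega

lemma aux_dom_le_italian (G : SimpleGraph γ) : dominationNumber G ≤ italianNumber G := by
  obtain ⟨f, hf, hw⟩ := aux_exists_min G
  set D := univ.filter (fun u => f u ≠ 0) with hDdef
  have hD : IsDomSet G ↑D := by
    intro u hu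
    have hu0 : f u = 0 := by
      by_contra h
      exact hu (Finset.mem_coe.mpr (mem_filter.mpr ⟨mem_univ u, h⟩))
    have h2 := hf.2 u hu0
    have hex : ∃ w ∈ univ.filter (fun w => G.Adj u w), f w ≠ 0 := by
      by_contra hall
      push_neg at hall
      rw [Finset.sum_eq_zero hall] at h2
      omega
    obtain ⟨w, hwmem, hwne⟩ := hex
    exact ⟨w, Finset.mem_coe.mpr (mem_filter.mpr ⟨mem_univ w, hwne⟩),
      (mem_filter.mp hwmem).2⟩
  have hcard : D.card ≤ ∑ u, f u := by
    calc D.card = ∑ _u ∈ D, 1 := by rw [Finset.sum_const, smul_eq_mul, mul_one]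
    _ ≤ ∑ u ∈ D, f u := Finset.sum_le_sum (fun i hi => by
        have := (mem_filter.mp hi).2; omega)
    _ ≤ ∑ u, f u := Finset.sum_le_sum_of_subset (subset_univ D)
  calc dominationNumber G ≤ D.card := aux_dom_le G hD
  _ ≤ ∑ u, f u := hcard
  _ = italianNumber G := hw

lemma aux_italian_lt_card (G : SimpleGraph γ) (hG : ∃ u : γ, 2 ≤ deg G u) :
    italianNumber G + 1 ≤ Fintype.card γ := by
  obtain ⟨u₀, hu₀⟩ := hG
  set f : γ → ℕ := fun u => if u = u₀ then 0 else 1 with hfdef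
  have hf : IsIDF G f := by
    constructor
    · intro u; simp only [hfdef]; split <;> omega
    · intro u hu
      have huu : u = u₀ := by
        by_contra h; simp [hfdef, h] at hu
      subst huu
      have hsum : ∑ w ∈ univ.filter (fun w => G.Adj u w), f w
          = ∑ w ∈ univ.filter (fun w => G.Adj u w), 1 := by
        apply Finset.sum_congr rfl
        intro w hw
        have hadj := (mem_filter.mp hw).2
        have : w ≠ u := fun h => G.loopless.irrefl u (h ▸ hadj)
        simp [hfdef, this]
      rw [hsum, Finset.sum_const, smul_eq_mul, mul_one]
      exact hu₀
  have hwt : ∑ u, f u = Fintype.card γ - 1 := by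
    have h1 : ∑ u, f u = ∑ u ∈ univ.erase u₀, f u :=
      (Finset.sum_erase univ (by simp [hfdef])).symm
    rw [h1]
    have h2 : ∑ u ∈ univ.erase u₀, f u = ∑ u ∈ univ.erase u₀, 1 := by
      apply Finset.sum_congr rfl
      intro w hw
      have : w ≠ u₀ := (Finset.mem_erase.mp hw).1
      simp [hfdef, this]
    rw [h2, Finset.sum_const, smul_eq_mul, mul_one, Finset.card_erase_of_mem (mem_univ u₀),
      Finset.card_univ]
  have hle := aux_italian_le G hf
  have hpos : 1 ≤ Fintype.card γ := by
    have : u₀ ∈ (univ : Finset γ) := mem_univ u₀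
    have := Fintype.card_pos_iff.mpr ⟨u₀⟩
    omega
  omega

end Aux1
section Aux2
set_option linter.unusedSectionVars false

variable {β : Type*} [Fintype β]

/-- Extension of a function on β \ {v} to β with value c at v. -/
noncomputable def ExtF (v : β) (c : ℕ) (g : {w : β // w ≠ v} → ℕ) : β → ℕ :=
  fun w => if h : w = v then c else g ⟨w, h⟩

lemma aux_extF_v (v : β) (c : ℕ) (g : {w : β // w ≠ v} → ℕ) : ExtF v c g v = c := by
  simp [ExtF]

lemma aux_extF_ne (v : β) (c : ℕ) (g : {w : β // w ≠ v} → ℕ) (w : β) (h : w ≠ v) :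
    ExtF v c g w = g ⟨w, h⟩ := by
  simp [ExtF, h]

lemma aux_image_filter (v : β) (p : β → Prop) :
    (univ.filter (fun b : {w : β // w ≠ v} => p b.1)).image Subtype.val
      = univ.filter (fun y => p y ∧ y ≠ v) := by
  ext y
  simp only [Finset.mem_image, mem_filter, mem_univ, true_and]
  constructor
  · rintro ⟨b, hb, rfl⟩; exact ⟨hb, b.2⟩
  · rintro ⟨hp, hv⟩; exact ⟨⟨y, hv⟩, hp, rfl⟩

lemma aux_sum_ext (v : β) (c : ℕ) (g : {w : β // w ≠ v} → ℕ) (p : β → Prop) :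
    ∑ y ∈ univ.filter p, ExtF v c g y
      = (if p v then c else 0)
        + ∑ b ∈ univ.filter (fun b : {w : β // w ≠ v} => p b.1), g b := by
  have h1 : ∑ b ∈ univ.filter (fun b : {w : β // w ≠ v} => p b.1), g b
      = ∑ y ∈ univ.filter (fun y => p y ∧ y ≠ v), ExtF v c g y := by
    rw [← aux_image_filter v p,
      Finset.sum_image (fun a _ b _ h => Subtype.ext h)]
    exact Finset.sum_congr rfl (fun b _ => (aux_extF_ne v c g b.1 b.2).symm)
  rw [h1, ← Finset.sum_filter_add_sum_filter_not (univ.filter p) (fun y => y = v)]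
  congr 1
  · -- sum over those equal to v
    by_cases hp : p v
    · have : (univ.filter p).filter (fun y => y = v) = {v} := by
        ext y; simp only [mem_filter, mem_univ, true_and, Finset.mem_singleton]
        constructor
        · rintro ⟨-, rfl⟩; rfl
        · rintro rfl; exact ⟨hp, rfl⟩
      rw [this, Finset.sum_singleton, aux_extF_v, if_pos hp]
    · have : (univ.filter p).filter (fun y => y = v) = ∅ := by
        ext y; simp only [mem_filter, mem_univ, true_and, Finset.notMem_empty, iff_false,
          not_and]
        rintro hpy rfl; exact hp hpy
      rw [this, Finset.sum_empty, if_neg hp]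
  · rw [Finset.filter_filter]

lemma aux_sum_ext_univ (v : β) (c : ℕ) (g : {w : β // w ≠ v} → ℕ) :
    ∑ y, ExtF v c g y = c + ∑ b, g b := by
  have := aux_sum_ext v c g (fun _ => True)
  simpa using this

lemma aux_delete_adj (H : SimpleGraph β) (v : β) (a b : {w : β // w ≠ v}) :
    (deleteVertex H v).Adj a b ↔ H.Adj a.1 b.1 := by
  simp [deleteVertex]

/-- neighbour sums in H of an extension, in terms of neighbour sums in H - v. -/
lemma aux_sum_ext_nbr (H : SimpleGraph β) (v : β) (c : ℕ) (g : {w : β // w ≠ v} → ℕ)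
    (y : β) :
    ∑ y' ∈ univ.filter (fun y' => H.Adj y y'), ExtF v c g y'
      = (if H.Adj y v then c else 0)
        + ∑ b ∈ univ.filter (fun b : {w : β // w ≠ v} => H.Adj y b.1), g b :=
  aux_sum_ext v c g (fun y' => H.Adj y y')

/-- For a vertex a of H - v, its neighbour sum in H - v equals the corresponding
filter sum in H. -/
lemma aux_delete_nbr_sum (H : SimpleGraph β) (v : β) (g : {w : β // w ≠ v} → ℕ)
    (a : {w : β // w ≠ v}) :
    ∑ b ∈ univ.filter (fun b => (deleteVertex H v).Adj a b), g b
      = ∑ b ∈ univ.filter (fun b : {w : β // w ≠ v} => H.Adj a.1 b.1), g b := by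
  apply Finset.sum_congr _ (fun _ _ => rfl)
  ext b
  simp [aux_delete_adj]

/-- γ_I(H) ≤ γ_I(H-v) + 1. -/
lemma aux_italian_delete_lb (H : SimpleGraph β) (v : β) :
    italianNumber H ≤ italianNumber (deleteVertex H v) + 1 := by
  obtain ⟨g, hg, hw⟩ := aux_exists_min (deleteVertex H v)
  have hidf : IsIDF H (ExtF v 1 g) := by
    constructor
    · intro u
      by_cases h : u = v
      · subst h; rw [aux_extF_v]; omega
      · rw [aux_extF_ne v 1 g u h]; exact hg.1 _
    · intro u hu
      have hne : u ≠ v := by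
        intro h; subst h; rw [aux_extF_v] at hu; omega
      rw [aux_extF_ne v 1 g u hne] at hu
      have h2 := hg.2 ⟨u, hne⟩ hu
      rw [aux_delete_nbr_sum] at h2
      have h2' : 2 ≤ ∑ b ∈ univ.filter (fun b : {w : β // w ≠ v} => H.Adj u b.1), g b := h2
      rw [aux_sum_ext_nbr]
      omega
  have := aux_italian_le H hidf
  rw [aux_sum_ext_univ, hw] at this
  omega

end Aux2
section Aux3
set_option linter.unusedSectionVars false

variable {α β : Type*} [Fintype α] [Fintype β]
variable (G : SimpleGraph α) (H : SimpleGraph β) (v : β)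

lemma aux_total (f : α × β → ℕ) : ∑ p, f p = ∑ x, copyWeight f x := by
  rw [Fintype.sum_prod_type]; rfl

lemma aux_sum_nbr_nonroot (f : α × β → ℕ) (x : α) (y : β) (hy : y ≠ v) :
    ∑ w ∈ univ.filter (fun w => (rootedProd G H v).Adj (x, y) w), f w
      = ∑ y' ∈ univ.filter (fun y' => H.Adj y y'), f (x, y') := by
  rw [Finset.sum_filter, Finset.sum_filter, Fintype.sum_prod_type]
  have hz : ∀ x' ∈ (univ : Finset α), x' ≠ x →
      (∑ y', if (rootedProd G H v).Adj (x, y) (x', y') then f (x', y') else 0) = 0 := by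
    intro x' _ hx'
    apply Finset.sum_eq_zero
    intro y' _
    rw [if_neg]
    rintro (⟨h1, -⟩ | ⟨h1, -, -⟩)
    · exact hx' h1.symm
    · exact hy h1
  rw [Finset.sum_eq_single_of_mem x (mem_univ x) hz]
  apply Finset.sum_congr rfl
  intro y' _
  by_cases h : H.Adj y y'
  · have hadj : (rootedProd G H v).Adj (x, y) (x, y') := Or.inl ⟨rfl, h⟩
    rw [if_pos h, if_pos hadj]
  · rw [if_neg h, if_neg]
    rintro (⟨-, h'⟩ | ⟨h', -, -⟩)
    · exact h h'
    · exact hy h'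

lemma aux_sum_nbr_root (f : α × β → ℕ) (x : α) :
    ∑ w ∈ univ.filter (fun w => (rootedProd G H v).Adj (x, v) w), f w
      = (∑ y' ∈ univ.filter (fun y' => H.Adj v y'), f (x, y'))
        + ∑ x' ∈ univ.filter (fun x' => G.Adj x x'), f (x', v) := by
  rw [Finset.sum_filter, Finset.sum_filter, Finset.sum_filter, Fintype.sum_prod_type]
  have key : ∀ x' y', (if (rootedProd G H v).Adj (x, v) (x', y') then f (x', y') else 0)
      = (if x' = x ∧ H.Adj v y' then f (x', y') else 0)
        + (if y' = v ∧ G.Adj x x' then f (x', y') else 0) := by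
    intro x' y'
    by_cases h1 : x' = x ∧ H.Adj v y'
    · have hadj : (rootedProd G H v).Adj (x, v) (x', y') := Or.inl ⟨h1.1.symm, h1.2⟩
      rw [if_pos h1, if_pos hadj, if_neg, add_zero]
      rintro ⟨hv, -⟩
      exact H.loopless.irrefl v (hv ▸ h1.2)
    · by_cases h2 : y' = v ∧ G.Adj x x'
      · have hadj : (rootedProd G H v).Adj (x, v) (x', y') := Or.inr ⟨rfl, h2.1, h2.2⟩
        rw [if_pos h2, if_neg h1, if_pos hadj, zero_add]
      · rw [if_neg h1, if_neg h2, if_neg, add_zero]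
        rintro (⟨ha, hb⟩ | ⟨-, hb, hc⟩)
        · exact h1 ⟨ha.symm, hb⟩
        · exact h2 ⟨hb, hc⟩
  simp only [key, Finset.sum_add_distrib]
  congr 1
  · have hz : ∀ x' ∈ (univ : Finset α), x' ≠ x →
        (∑ y', if x' = x ∧ H.Adj v y' then f (x', y') else 0) = 0 := by
      intro x' _ hx'
      apply Finset.sum_eq_zero
      intro y' _
      rw [if_neg (fun h => hx' h.1)]
    rw [Finset.sum_eq_single_of_mem x (mem_univ x) hz]
    apply Finset.sum_congr rfl
    intro y' _
    by_cases h : H.Adj v y'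
    · rw [if_pos ⟨rfl, h⟩, if_pos h]
    · rw [if_neg (fun hh => h hh.2), if_neg h]
  · apply Finset.sum_congr rfl
    intro x' _
    by_cases h : G.Adj x x'
    · simp [h]
    · simp [h]

variable {G H v}

/-- non-root vertices of a copy are dominated inside the copy. -/
lemma aux_copy_nonroot_dom {f : α × β → ℕ} (hf : IsIDF (rootedProd G H v) f)
    (x : α) (y : β) (hy : y ≠ v) (h0 : f (x, y) = 0) :
    2 ≤ ∑ y' ∈ univ.filter (fun y' => H.Adj y y'), f (x, y') := by
  have := hf.2 (x, y) h0
  rwa [aux_sum_nbr_nonroot G H v f x y hy] at this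

lemma aux_copy_root_dom {f : α × β → ℕ} (hf : IsIDF (rootedProd G H v) f)
    (x : α) (h0 : f (x, v) = 0) :
    2 ≤ (∑ y' ∈ univ.filter (fun y' => H.Adj v y'), f (x, y'))
        + ∑ x' ∈ univ.filter (fun x' => G.Adj x x'), f (x', v) := by
  have := hf.2 (x, v) h0
  rwa [aux_sum_nbr_root G H v f x] at this

/-- the copy function bumped at the root is an IDF of H. -/
lemma aux_copy_ge {f : α × β → ℕ} (hf : IsIDF (rootedProd G H v) f) (x : α) :
    italianNumber H ≤ copyWeight f x + 1 := by
  set g : β → ℕ := fun y => if y = v then max (f (x, v)) 1 else f (x, y) with hgdef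
  have hgf : ∀ y, f (x, y) ≤ g y := by
    intro y; simp only [hgdef]; split
    · rename_i h; subst h; exact le_max_left _ _
    · exact le_refl _
  have hidf : IsIDF H g := by
    constructor
    · intro u; simp only [hgdef]; split
      · exact max_le (hf.1 _) (by omega)
      · exact hf.1 _
    · intro u hu
      have hne : u ≠ v := by
        intro h; subst h; simp only [hgdef, if_pos rfl] at hu; omega
      have hu0 : f (x, u) = 0 := by simpa [hgdef, hne] using hu
      have h2 := aux_copy_nonroot_dom hf x u hne hu0
      calc 2 ≤ ∑ y' ∈ univ.filter (fun y' => H.Adj u y'), f (x, y') := h2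
      _ ≤ ∑ y' ∈ univ.filter (fun y' => H.Adj u y'), g y' :=
          Finset.sum_le_sum (fun i _ => hgf i)
  have hle := aux_italian_le H hidf
  have hwt : ∑ y, g y ≤ copyWeight f x + 1 := by
    have : ∀ y, g y ≤ f (x, y) + (if y = v then 1 else 0) := by
      intro y; simp only [hgdef]; split
      · rename_i h; subst h
        exact max_le (by omega) (by omega)
      · omega
    calc ∑ y, g y ≤ ∑ y, (f (x, y) + if y = v then 1 else 0) :=
        Finset.sum_le_sum (fun i _ => this i)
    _ = copyWeight f x + 1 := by
        rw [Finset.sum_add_distrib, Finset.sum_ite_eq' univ v (fun _ => 1), if_pos (mem_univ v)]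
        rfl
  omega

lemma aux_copy_ge_of_pos {f : α × β → ℕ} (hf : IsIDF (rootedProd G H v) f) (x : α)
    (hpos : f (x, v) ≠ 0) :
    italianNumber H ≤ copyWeight f x := by
  have hidf : IsIDF H (fun y => f (x, y)) := by
    constructor
    · intro u; exact hf.1 _
    · intro u hu
      have hne : u ≠ v := by intro h; subst h; exact hpos hu
      exact aux_copy_nonroot_dom hf x u hne hu
  exact aux_italian_le H hidf

lemma aux_copy_ge_of_internal {f : α × β → ℕ} (hf : IsIDF (rootedProd G H v) f) (x : α)
    (hint : 2 ≤ ∑ y' ∈ univ.filter (fun y' => H.Adj v y'), f (x, y')) :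
    italianNumber H ≤ copyWeight f x := by
  have hidf : IsIDF H (fun y => f (x, y)) := by
    constructor
    · intro u; exact hf.1 _
    · intro u hu
      by_cases hne : u = v
      · subst hne; exact hint
      · exact aux_copy_nonroot_dom hf x u hne hu
  exact aux_italian_le H hidf

/-- if the root of a copy has value 0, the copy restricted to H - v is an IDF of H - v
of the same weight. -/
lemma aux_copy_restrict {f : α × β → ℕ} (hf : IsIDF (rootedProd G H v) f) (x : α)
    (h0 : f (x, v) = 0) :
    IsIDF (deleteVertex H v) (fun b => f (x, b.1))
      ∧ ∑ b : {w : β // w ≠ v}, f (x, b.1) = copyWeight f x := by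
  set g : {w : β // w ≠ v} → ℕ := fun b => f (x, b.1) with hgdef
  have hext : ∀ y, ExtF v 0 g y = f (x, y) := by
    intro y
    by_cases h : y = v
    · subst h; rw [aux_extF_v, h0]
    · rw [aux_extF_ne v 0 g y h]
  constructor
  · constructor
    · intro b; exact hf.1 _
    · intro b hb
      have h2 := aux_copy_nonroot_dom hf x b.1 b.2 hb
      have h3 := aux_sum_ext_nbr H v 0 g b.1
      rw [Finset.sum_congr rfl (fun y' _ => hext y')] at h3
      simp only [ite_self, zero_add] at h3
      rw [aux_delete_nbr_sum]
      omega
  · have := aux_sum_ext_univ v 0 g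
    rw [Finset.sum_congr rfl (fun y _ => hext y), zero_add] at this
    exact this.symm

end Aux3
section Aux4
set_option linter.unusedSectionVars false

variable {α β : Type*} [Fintype α] [Fintype β]
variable (G : SimpleGraph α) (H : SimpleGraph β) (v : β)

lemma aux_ub_copies :
    italianNumber (rootedProd G H v) ≤ Fintype.card α * italianNumber H := by
  obtain ⟨h, hh, hw⟩ := aux_exists_min H
  set f : α × β → ℕ := fun p => h p.2 with hfdef
  have hfval : ∀ x y, f (x, y) = h y := fun x y => rfl
  have hidf : IsIDF (rootedProd G H v) f := by
    constructor
    · intro u; exact hh.1 _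
    · rintro ⟨x, y⟩ h0
      rw [hfval] at h0
      have h2 := hh.2 y h0
      by_cases hy : y = v
      · rw [hy] at h2 ⊢
        rw [aux_sum_nbr_root G H v f x]
        have hA : ∑ y' ∈ univ.filter (fun y' => H.Adj v y'), f (x, y')
            = ∑ y' ∈ univ.filter (fun y' => H.Adj v y'), h y' :=
          Finset.sum_congr rfl (fun y' _ => hfval x y')
        omega
      · rw [aux_sum_nbr_nonroot G H v f x y hy]
        have hA : ∑ y' ∈ univ.filter (fun y' => H.Adj y y'), f (x, y')
            = ∑ y' ∈ univ.filter (fun y' => H.Adj y y'), h y' :=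
          Finset.sum_congr rfl (fun y' _ => hfval x y')
        omega
  have hle := aux_italian_le (rootedProd G H v) hidf
  rw [aux_total] at hle
  have hcw : ∀ x, copyWeight f x = italianNumber H := by
    intro x
    unfold copyWeight
    rw [Finset.sum_congr rfl (fun y _ => hfval x y), hw]
  rw [Finset.sum_congr rfl (fun x _ => hcw x), Finset.sum_const, smul_eq_mul,
    Finset.card_univ] at hle
  exact hle

lemma aux_lb_gamma :
    Fintype.card α * (italianNumber H - 1) + dominationNumber G
      ≤ italianNumber (rootedProd G H v) := by
  have : Nonempty β := ⟨v⟩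
  have h1H : 1 ≤ italianNumber H := aux_one_le_italian H
  obtain ⟨f, hf, hw⟩ := aux_exists_min (rootedProd G H v)
  set B := univ.filter (fun x => italianNumber H ≤ copyWeight f x) with hBdef
  have hBdom : IsDomSet G ↑B := by
    intro u hu
    have hucw : ¬ (italianNumber H ≤ copyWeight f u) := by
      intro h
      exact hu (Finset.mem_coe.mpr (mem_filter.mpr ⟨mem_univ u, h⟩))
    have h0 : f (u, v) = 0 := by
      by_contra h
      exact hucw (aux_copy_ge_of_pos hf u h)
    have hint : ∑ y' ∈ univ.filter (fun y' => H.Adj v y'), f (u, y') ≤ 1 := by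
      by_contra h
      exact hucw (aux_copy_ge_of_internal hf u (by omega))
    have hroot := aux_copy_root_dom hf u h0
    have hext : ∑ x' ∈ univ.filter (fun x' => G.Adj u x'), f (x', v) ≠ 0 := by omega
    obtain ⟨x', hx'mem, hx'ne⟩ := Finset.exists_ne_zero_of_sum_ne_zero hext
    refine ⟨x', Finset.mem_coe.mpr (mem_filter.mpr ⟨mem_univ x', ?_⟩),
      (mem_filter.mp hx'mem).2⟩
    exact aux_copy_ge_of_pos hf x' hx'ne
  have hcount : ∀ x, (italianNumber H - 1) + (if x ∈ B then 1 else 0) ≤ copyWeight f x := by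
    intro x
    by_cases hx : x ∈ B
    · have := (mem_filter.mp hx).2
      rw [if_pos hx]; omega
    · have := aux_copy_ge hf x
      rw [if_neg hx]; omega
  calc Fintype.card α * (italianNumber H - 1) + dominationNumber G
      ≤ Fintype.card α * (italianNumber H - 1) + B.card := by
        have := aux_dom_le G hBdom; omega
    _ = ∑ x : α, ((italianNumber H - 1) + (if x ∈ B then 1 else 0)) := by
        rw [Finset.sum_add_distrib, Finset.sum_const, smul_eq_mul, Finset.card_univ,
          Finset.sum_ite_mem, Finset.univ_inter, Finset.sum_const, smul_eq_mul, mul_one]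
    _ ≤ ∑ x : α, copyWeight f x := Finset.sum_le_sum (fun x _ => hcount x)
    _ = italianNumber (rootedProd G H v) := by rw [← aux_total, hw]

end Aux4
section Aux5
set_option linter.unusedSectionVars false

variable {α β : Type*} [Fintype α] [Fintype β]
variable (G : SimpleGraph α) (H : SimpleGraph β) (v : β)

lemma aux_ub_gammaI (g : {w : β // w ≠ v} → ℕ) (hg : IsIDF (deleteVertex H v) g)
    (hgw : ∑ b, g b = italianNumber H - 1) :
    italianNumber (rootedProd G H v)
      ≤ Fintype.card α * (italianNumber H - 1) + italianNumber G := by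
  obtain ⟨wf, hwidf, hww⟩ := aux_exists_min G
  set f : α × β → ℕ := fun p => ExtF v (wf p.1) g p.2 with hfdef
  have hfv : ∀ x, f (x, v) = wf x := fun x => aux_extF_v v _ g
  have hfny : ∀ x y (h : y ≠ v), f (x, y) = g ⟨y, h⟩ := fun x y h => aux_extF_ne v _ g y h
  have hfe : ∀ x y, f (x, y) = ExtF v (wf x) g y := fun x y => rfl
  have hidf : IsIDF (rootedProd G H v) f := by
    constructor
    · rintro ⟨x, y⟩
      by_cases h : y = v
      · rw [h]; rw [hfv]; exact hwidf.1 x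
      · rw [hfny x y h]; exact hg.1 _
    · rintro ⟨x, y⟩ h0
      by_cases h : y = v
      · rw [h] at h0 ⊢
        rw [hfv] at h0
        rw [aux_sum_nbr_root G H v f x]
        have hB : ∑ x' ∈ univ.filter (fun x' => G.Adj x x'), f (x', v)
            = ∑ x' ∈ univ.filter (fun x' => G.Adj x x'), wf x' :=
          Finset.sum_congr rfl (fun x' _ => hfv x')
        have h2 := hwidf.2 x h0
        omega
      · rw [hfny x y h] at h0
        rw [aux_sum_nbr_nonroot G H v f x y h]
        have hA : ∑ y' ∈ univ.filter (fun y' => H.Adj y y'), f (x, y')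
            = ∑ y' ∈ univ.filter (fun y' => H.Adj y y'), ExtF v (wf x) g y' :=
          Finset.sum_congr rfl (fun y' _ => hfe x y')
        rw [hA, aux_sum_ext_nbr H v (wf x) g y]
        have h2 := hg.2 ⟨y, h⟩ h0
        rw [aux_delete_nbr_sum] at h2
        have h2' : 2 ≤ ∑ b ∈ univ.filter (fun b : {w : β // w ≠ v} => H.Adj y b.1), g b := h2
        omega
  have hle := aux_italian_le (rootedProd G H v) hidf
  rw [aux_total] at hle
  have hcw : ∀ x, copyWeight f x = wf x + (italianNumber H - 1) := by
    intro x
    show ∑ y, f (x, y) = _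
    rw [Finset.sum_congr rfl (fun y _ => hfe x y), aux_sum_ext_univ, hgw]
  rw [Finset.sum_congr rfl (fun x _ => hcw x), Finset.sum_add_distrib, hww,
    Finset.sum_const, smul_eq_mul, Finset.card_univ] at hle
  omega

lemma aux_ub_gamma_a (h : β → ℕ) (hhidf : IsIDF H h) (hhw : ∑ u, h u = italianNumber H)
    (hhv : h v = 2) (g : {w : β // w ≠ v} → ℕ) (hg : IsIDF (deleteVertex H v) g)
    (hgw : ∑ b, g b = italianNumber H - 1) :
    italianNumber (rootedProd G H v)
      ≤ Fintype.card α * (italianNumber H - 1) + dominationNumber G := by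
  have hne : Nonempty β := ⟨v⟩
  have h1H : 1 ≤ italianNumber H := aux_one_le_italian H
  obtain ⟨D, hD, hDcard⟩ := aux_exists_min_dom G
  set f : α × β → ℕ := fun p => if p.1 ∈ D then h p.2 else ExtF v 0 g p.2 with hfdef
  have hfD : ∀ x y, x ∈ D → f (x, y) = h y := by
    intro x y hx; rw [hfdef]; simp [hx]
  have hfN : ∀ x y, x ∉ D → f (x, y) = ExtF v 0 g y := by
    intro x y hx; rw [hfdef]; simp [hx]
  have hidf : IsIDF (rootedProd G H v) f := by
    constructor
    · rintro ⟨x, y⟩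
      by_cases hx : x ∈ D
      · rw [hfD x y hx]; exact hhidf.1 y
      · rw [hfN x y hx]
        by_cases hyv : y = v
        · rw [hyv, aux_extF_v]; omega
        · rw [aux_extF_ne v 0 g y hyv]; exact hg.1 _
    · rintro ⟨x, y⟩ h0
      by_cases hx : x ∈ D
      · rw [hfD x y hx] at h0
        by_cases hyv : y = v
        · rw [hyv, hhv] at h0; omega
        · rw [aux_sum_nbr_nonroot G H v f x y hyv]
          have h2 := hhidf.2 y h0
          have hA : ∑ y' ∈ univ.filter (fun y' => H.Adj y y'), f (x, y')
              = ∑ y' ∈ univ.filter (fun y' => H.Adj y y'), h y' :=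
            Finset.sum_congr rfl (fun y' _ => hfD x y' hx)
          omega
      · rw [hfN x y hx] at h0
        by_cases hyv : y = v
        · rw [hyv] at h0 ⊢
          rw [aux_sum_nbr_root G H v f x]
          obtain ⟨d, hdD, hdadj⟩ := hD x (fun hc => hx (Finset.mem_coe.mp hc))
          have hdD' : d ∈ D := Finset.mem_coe.mp hdD
          have hfd : f (d, v) = 2 := by rw [hfD d v hdD', hhv]
          have hdmem : d ∈ univ.filter (fun x' => G.Adj x x') :=
            mem_filter.mpr ⟨mem_univ d, hdadj⟩
          have hle := Finset.single_le_sum (f := fun x' => f (x', v))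
            (fun i _ => Nat.zero_le _) hdmem
          have hle' : f (d, v) ≤ ∑ x' ∈ univ.filter (fun x' => G.Adj x x'), f (x', v) := hle
          omega
        · rw [aux_extF_ne v 0 g y hyv] at h0
          rw [aux_sum_nbr_nonroot G H v f x y hyv]
          have hA : ∑ y' ∈ univ.filter (fun y' => H.Adj y y'), f (x, y')
              = ∑ y' ∈ univ.filter (fun y' => H.Adj y y'), ExtF v 0 g y' :=
            Finset.sum_congr rfl (fun y' _ => hfN x y' hx)
          rw [hA, aux_sum_ext_nbr H v 0 g y]
          have h2 := hg.2 ⟨y, hyv⟩ h0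
          rw [aux_delete_nbr_sum] at h2
          have h2' : 2 ≤ ∑ b ∈ univ.filter (fun b : {w : β // w ≠ v} => H.Adj y b.1), g b := h2
          omega
  have hle := aux_italian_le (rootedProd G H v) hidf
  rw [aux_total] at hle
  have hcw : ∀ x, copyWeight f x = (italianNumber H - 1) + (if x ∈ D then 1 else 0) := by
    intro x
    show ∑ y, f (x, y) = _
    by_cases hx : x ∈ D
    · rw [Finset.sum_congr rfl (fun y _ => hfD x y hx), hhw, if_pos hx]; omega
    · rw [Finset.sum_congr rfl (fun y _ => hfN x y hx), aux_sum_ext_univ, hgw, if_neg hx]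
      omega
  rw [Finset.sum_congr rfl (fun x _ => hcw x), Finset.sum_add_distrib, Finset.sum_const,
    smul_eq_mul, Finset.card_univ, Finset.sum_ite_mem, Finset.univ_inter,
    Finset.sum_const, smul_eq_mul, mul_one, hDcard] at hle
  omega

lemma aux_ub_gamma_b (g : {w : β // w ≠ v} → ℕ) (hg : IsIDF (deleteVertex H v) g)
    (hgw : ∑ b, g b = italianNumber H - 1)
    (hg1 : 1 ≤ ∑ y' ∈ univ.filter (fun y' => H.Adj v y'), ExtF v 0 g y') :
    italianNumber (rootedProd G H v)
      ≤ Fintype.card α * (italianNumber H - 1) + dominationNumber G := by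
  obtain ⟨D, hD, hDcard⟩ := aux_exists_min_dom G
  set f : α × β → ℕ := fun p =>
    ExtF v 0 g p.2 + (if p.2 = v ∧ p.1 ∈ D then 1 else 0) with hfdef
  have hfny : ∀ x y (hy : y ≠ v), f (x, y) = g ⟨y, hy⟩ := by
    intro x y hy; rw [hfdef]; simp [aux_extF_ne v 0 g y hy, hy]
  have hfvD : ∀ x, x ∈ D → f (x, v) = 1 := by
    intro x hx; rw [hfdef]; simp [aux_extF_v, hx]
  have hfvN : ∀ x, x ∉ D → f (x, v) = 0 := by
    intro x hx; rw [hfdef]; simp [aux_extF_v, hx]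
  have hfge : ∀ x y, ExtF v 0 g y ≤ f (x, y) := by
    intro x y; rw [hfdef]; exact Nat.le_add_right _ _
  have hidf : IsIDF (rootedProd G H v) f := by
    constructor
    · rintro ⟨x, y⟩
      by_cases hyv : y = v
      · rw [hyv]
        by_cases hx : x ∈ D
        · rw [hfvD x hx]; omega
        · rw [hfvN x hx]; omega
      · rw [hfny x y hyv]; exact hg.1 _
    · rintro ⟨x, y⟩ h0
      by_cases hyv : y = v
      · rw [hyv] at h0 ⊢
        have hxD : x ∉ D := by
          intro hx; rw [hfvD x hx] at h0; omega
        rw [aux_sum_nbr_root G H v f x]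
        have hint : ∑ y' ∈ univ.filter (fun y' => H.Adj v y'), ExtF v 0 g y'
            ≤ ∑ y' ∈ univ.filter (fun y' => H.Adj v y'), f (x, y') :=
          Finset.sum_le_sum (fun i _ => hfge x i)
        obtain ⟨d, hdD, hdadj⟩ := hD x (fun hc => hxD (Finset.mem_coe.mp hc))
        have hdD' : d ∈ D := Finset.mem_coe.mp hdD
        have hfd : f (d, v) = 1 := hfvD d hdD'
        have hdmem : d ∈ univ.filter (fun x' => G.Adj x x') :=
          mem_filter.mpr ⟨mem_univ d, hdadj⟩
        have hle := Finset.single_le_sum (f := fun x' => f (x', v))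
          (fun i _ => Nat.zero_le _) hdmem
        have hle' : f (d, v) ≤ ∑ x' ∈ univ.filter (fun x' => G.Adj x x'), f (x', v) := hle
        omega
      · rw [hfny x y hyv] at h0
        rw [aux_sum_nbr_nonroot G H v f x y hyv]
        have hA : ∑ y' ∈ univ.filter (fun y' => H.Adj y y'), ExtF v 0 g y'
            ≤ ∑ y' ∈ univ.filter (fun y' => H.Adj y y'), f (x, y') :=
          Finset.sum_le_sum (fun i _ => hfge x i)
        have hB := aux_sum_ext_nbr H v 0 g y
        simp only [ite_self, zero_add] at hB
        have h2 := hg.2 ⟨y, hyv⟩ h0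
        rw [aux_delete_nbr_sum] at h2
        have h2' : 2 ≤ ∑ b ∈ univ.filter (fun b : {w : β // w ≠ v} => H.Adj y b.1), g b := h2
        omega
  have hle := aux_italian_le (rootedProd G H v) hidf
  rw [aux_total] at hle
  have hcw : ∀ x, copyWeight f x = (italianNumber H - 1) + (if x ∈ D then 1 else 0) := by
    intro x
    show ∑ y, f (x, y) = _
    have hfe : ∀ y, f (x, y) = ExtF v 0 g y + (if y = v ∧ x ∈ D then 1 else 0) := by
      intro y; rw [hfdef]
    rw [Finset.sum_congr rfl (fun y _ => hfe y), Finset.sum_add_distrib,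
      aux_sum_ext_univ, hgw]
    have hite : ∑ y : β, (if y = v ∧ x ∈ D then 1 else 0) = if x ∈ D then 1 else 0 := by
      by_cases hx : x ∈ D
      · simp [hx]
      · simp [hx]
    rw [hite]
    omega
  rw [Finset.sum_congr rfl (fun x _ => hcw x), Finset.sum_add_distrib, Finset.sum_const,
    smul_eq_mul, Finset.card_univ, Finset.sum_ite_mem, Finset.univ_inter,
    Finset.sum_const, smul_eq_mul, mul_one, hDcard] at hle
  omega

lemma aux_lb_gammaI
    (hP1 : ¬ ∃ h : β → ℕ, IsIDF H h ∧ ∑ u, h u = italianNumber H ∧ h v = 2)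
    (hP2 : ¬ ∃ g : {w : β // w ≠ v} → ℕ, IsIDF (deleteVertex H v) g ∧
        (∑ b, g b = italianNumber H - 1) ∧
        1 ≤ ∑ y' ∈ univ.filter (fun y' => H.Adj v y'), ExtF v 0 g y') :
    Fintype.card α * (italianNumber H - 1) + italianNumber G
      ≤ italianNumber (rootedProd G H v) := by
  have hne : Nonempty β := ⟨v⟩
  have h1H : 1 ≤ italianNumber H := aux_one_le_italian H
  obtain ⟨f, hf, hw⟩ := aux_exists_min (rootedProd G H v)
  set wG : α → ℕ := fun x => if italianNumber H + 1 ≤ copyWeight f x then 2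
    else if italianNumber H ≤ copyWeight f x then 1 else 0 with hwGdef
  have hwG_eq : ∀ x, wG x = if italianNumber H + 1 ≤ copyWeight f x then 2
      else if italianNumber H ≤ copyWeight f x then 1 else 0 := fun x => by
    simp only [hwGdef]
  have hcw_lb : ∀ x, italianNumber H - 1 ≤ copyWeight f x := fun x => by
    have := aux_copy_ge hf x; omega
  have hwf : ∀ x, f (x, v) ≤ wG x := by
    intro x
    by_cases h0 : f (x, v) = 0
    · rw [h0]; exact Nat.zero_le _
    · have hge : italianNumber H ≤ copyWeight f x := aux_copy_ge_of_pos hf x h0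
      by_cases h2 : f (x, v) = 2
      · have hcw2 : italianNumber H + 1 ≤ copyWeight f x := by
          by_contra hcon
          have hcweq : copyWeight f x = italianNumber H := by omega
          refine hP1 ⟨fun y => f (x, y), ⟨fun u => hf.1 _, fun u hu => ?_⟩, hcweq, h2⟩
          have hnev : u ≠ v := by
            intro hh
            rw [hh] at hu
            have hu' : f (x, v) = 0 := hu
            omega
          exact aux_copy_nonroot_dom hf x u hnev hu
        rw [hwG_eq x, if_pos hcw2]
        have := hf.1 (x, v); omega
      · have h1 : f (x, v) = 1 := by
          have := hf.1 (x, v); omega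
        rw [hwG_eq x]
        by_cases hc : italianNumber H + 1 ≤ copyWeight f x
        · rw [if_pos hc]; omega
        · rw [if_neg hc, if_pos hge]; omega
  have hIDF : IsIDF G wG := by
    constructor
    · intro x
      rw [hwG_eq x]
      split
      · omega
      · split <;> omega
    · intro x hx0
      have hnot : ¬ italianNumber H ≤ copyWeight f x := by
        intro hc
        rw [hwG_eq x] at hx0
        by_cases h1 : italianNumber H + 1 ≤ copyWeight f x
        · rw [if_pos h1] at hx0; omega
        · rw [if_neg h1, if_pos hc] at hx0; omega
      have hcw_eq : copyWeight f x = italianNumber H - 1 := by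
        have := hcw_lb x; omega
      have h0 : f (x, v) = 0 := by
        by_contra h; exact hnot (aux_copy_ge_of_pos hf x h)
      obtain ⟨hres, hresw⟩ := aux_copy_restrict hf x h0
      have hgw' : ∑ b : {w : β // w ≠ v}, f (x, b.1) = italianNumber H - 1 := by
        rw [hresw, hcw_eq]
      have hext : ∀ y', ExtF v 0 (fun b : {w : β // w ≠ v} => f (x, b.1)) y' = f (x, y') := by
        intro y'
        by_cases hy' : y' = v
        · rw [hy', aux_extF_v, h0]
        · rw [aux_extF_ne _ _ _ _ hy']
      have hint : ∑ y' ∈ univ.filter (fun y' => H.Adj v y'),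
          ExtF v 0 (fun b : {w : β // w ≠ v} => f (x, b.1)) y' = 0 := by
        by_contra hcon
        exact hP2 ⟨fun b => f (x, b.1), hres, hgw', by omega⟩
      have hint' : ∑ y' ∈ univ.filter (fun y' => H.Adj v y'), f (x, y') = 0 := by
        rw [Finset.sum_congr rfl (fun y' _ => (hext y').symm)]
        exact hint
      have hroot := aux_copy_root_dom hf x h0
      have hext2 : 2 ≤ ∑ x' ∈ univ.filter (fun x' => G.Adj x x'), f (x', v) := by omega
      calc 2 ≤ ∑ x' ∈ univ.filter (fun x' => G.Adj x x'), f (x', v) := hext2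
      _ ≤ ∑ x' ∈ univ.filter (fun x' => G.Adj x x'), wG x' :=
          Finset.sum_le_sum (fun i _ => hwf i)
  have hGle : italianNumber G ≤ ∑ x, wG x := aux_italian_le G hIDF
  have hpt : ∀ x, (italianNumber H - 1) + wG x ≤ copyWeight f x := by
    intro x
    rw [hwG_eq x]
    by_cases h1 : italianNumber H + 1 ≤ copyWeight f x
    · rw [if_pos h1]; omega
    · rw [if_neg h1]
      by_cases h2 : italianNumber H ≤ copyWeight f x
      · rw [if_pos h2]; omega
      · rw [if_neg h2]; have := hcw_lb x; omega
  have hsum : ∑ x : α, ((italianNumber H - 1) + wG x) ≤ ∑ x, copyWeight f x :=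
    Finset.sum_le_sum (fun x _ => hpt x)
  rw [Finset.sum_add_distrib, Finset.sum_const, smul_eq_mul, Finset.card_univ,
    ← aux_total, hw] at hsum
  omega

end Aux5

/-- Theorem: for G of maximum degree at least 2, the following are
equivalent: (1) γ_I(G∘_v H) = n(G)(γ_I(H)−1)+γ_I(G) or γ_I(G∘_v H) = n(G)(γ_I(H)−1)+γ(G);
(2) γ_I(H − {v}) = γ_I(H) − 1. -/
theorem stmt15 {α β : Type*} [Fintype α] [Nonempty α] [Fintype β]
    (G : SimpleGraph α) (hG : ∃ u : α, 2 ≤ deg G u)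
    (H : SimpleGraph β) (v : β) :
    (italianNumber (rootedProd G H v) =
        Fintype.card α * (italianNumber H - 1) + italianNumber G ∨
      italianNumber (rootedProd G H v) =
        Fintype.card α * (italianNumber H - 1) + dominationNumber G) ↔
      italianNumber (deleteVertex H v) = italianNumber H - 1 := by
  have hbne : Nonempty β := ⟨v⟩
  have h1H : 1 ≤ italianNumber H := aux_one_le_italian H
  constructor
  · -- (1) → (2)
    intro h1
    have hdel_lb : italianNumber H ≤ italianNumber (deleteVertex H v) + 1 :=
      aux_italian_delete_lb H v
    by_contra hne2
    have hge : italianNumber H ≤ italianNumber (deleteVertex H v) := by omega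
    obtain ⟨f, hf, hw⟩ := aux_exists_min (rootedProd G H v)
    have hcw : ∀ x, italianNumber H ≤ copyWeight f x := by
      intro x
      by_cases h0 : f (x, v) = 0
      · obtain ⟨hres, hresw⟩ := aux_copy_restrict hf x h0
        have hle := aux_italian_le (deleteVertex H v) hres
        have hle' : italianNumber (deleteVertex H v) ≤ ∑ b : {w : β // w ≠ v}, f (x, b.1) :=
          hle
        omega
      · exact aux_copy_ge_of_pos hf x h0
    have hlower : Fintype.card α * italianNumber H ≤ italianNumber (rootedProd G H v) := by
      have hs : ∑ _x : α, italianNumber H ≤ ∑ x, copyWeight f x :=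
        Finset.sum_le_sum (fun x _ => hcw x)
      rw [Finset.sum_const, smul_eq_mul, Finset.card_univ, ← aux_total, hw] at hs
      exact hs
    have hIle : italianNumber G + 1 ≤ Fintype.card α := aux_italian_lt_card G hG
    have hDle : dominationNumber G ≤ italianNumber G := aux_dom_le_italian G
    have hmul : Fintype.card α * italianNumber H
        = Fintype.card α * (italianNumber H - 1) + Fintype.card α := by
      have h2 : italianNumber H - 1 + 1 = italianNumber H := by omega
      calc Fintype.card α * italianNumber H
          = Fintype.card α * ((italianNumber H - 1) + 1) := by rw [h2]
      _ = _ := by ring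
    rcases h1 with heq | heq <;> omega
  · intro h2
    obtain ⟨g₀, hg₀, hg₀w⟩ := aux_exists_min (deleteVertex H v)
    rw [h2] at hg₀w
    by_cases hP1 : ∃ h : β → ℕ, IsIDF H h ∧ ∑ u, h u = italianNumber H ∧ h v = 2
    · right
      obtain ⟨h, hhidf, hhw, hhv⟩ := hP1
      exact le_antisymm (aux_ub_gamma_a G H v h hhidf hhw hhv g₀ hg₀ hg₀w)
        (aux_lb_gamma G H v)
    · by_cases hP2 : ∃ g : {w : β // w ≠ v} → ℕ, IsIDF (deleteVertex H v) g ∧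
          (∑ b, g b = italianNumber H - 1) ∧
          1 ≤ ∑ y' ∈ univ.filter (fun y' => H.Adj v y'), ExtF v 0 g y'
      · right
        obtain ⟨g, hg, hgw, hg1⟩ := hP2
        exact le_antisymm (aux_ub_gamma_b G H v g hg hgw hg1) (aux_lb_gamma G H v)
      · left
        exact le_antisymm (aux_ub_gammaI G H v g₀ hg₀ hg₀w) (aux_lb_gammaI G H v hP1 hP2)
end
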